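/- Define ω(x) = (∫₀ˣ t^(α-1) e^(-t) dt)·(α - 1 - x) - x^α e^(-x) for α > 0 and x ≥ 0. Then ω(0) = 0 and ω is nonincreasing on [0,∞), hence ω(x) ≤ 0 for all x ≥ 0. -/

import Mathlib

open Real intervalIntegral MeasureTheory Set

theorem stmt_5 (α : ℝ) (hα : 0 < α) :
    let ω : ℝ → ℝ := fun x =>
      (∫ t in (0 : ℝ)..x, t ^ (α - 1) * Real.exp (-t)) * (α - 1 - x)
        - x ^ α * Real.exp (-x)
    ω 0 = 0 ∧ AntitoneOn ω (Set.Ici (0 : ℝ)) ∧ ∀ x : ℝ, 0 ≤ x → ω x ≤ 0 := by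
  intro ω
  set f : ℝ → ℝ := fun t => t ^ (α - 1) * Real.exp (-t) with hf
  set F : ℝ → ℝ := fun x => ∫ t in (0 : ℝ)..x, f t with hF
  have hint : ∀ a b : ℝ, IntervalIntegrable f volume a b := fun a b =>
    (intervalIntegrable_rpow' (by linarith)).mul_continuousOn
      ((Real.continuous_exp.comp continuous_neg).continuousOn)
  have hFcont : Continuous F := intervalIntegral.continuous_primitive hint 0
  have hmeas : Measurable f :=
    (measurable_id.pow_const (α - 1)).mul (Real.measurable_exp.comp measurable_neg)
  -- ω 0 = 0
  have hω0 : ω 0 = 0 := by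
    simp [ω, Real.zero_rpow hα.ne']
  -- continuity of ω on Ici 0
  have hωcont : ContinuousOn ω (Set.Ici (0 : ℝ)) := by
    apply ContinuousOn.sub
    · exact (hFcont.continuousOn).mul (by fun_prop)
    · apply ContinuousOn.mul _ (by fun_prop)
      intro x hx
      exact (Real.continuousAt_rpow_const x α (Or.inr hα.le)).continuousWithinAt
  -- derivative bound
  have hderiv : ∀ x ∈ interior (Set.Ici (0 : ℝ)),
      HasDerivAt ω (-(x ^ (α - 1) * Real.exp (-x)) - F x) x := by
    intro x hx
    rw [interior_Ici] at hx
    have hx0 : (0 : ℝ) < x := hx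
    have hfx : ContinuousAt f x := by
      apply ContinuousAt.mul _ (by fun_prop)
      exact Real.continuousAt_rpow_const x (α - 1) (Or.inl hx0.ne')
    have hFd : HasDerivAt F (f x) x :=
      intervalIntegral.integral_hasDerivAt_right (hint 0 x)
        (hmeas.stronglyMeasurable.stronglyMeasurableAtFilter) hfx
    have h1 : HasDerivAt (fun x : ℝ => F x * (α - 1 - x)) (f x * (α - 1 - x) + F x * (-1)) x := by
      exact hFd.mul (((hasDerivAt_id x).const_sub (α - 1)))
    have h2 : HasDerivAt (fun x : ℝ => x ^ α * Real.exp (-x))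
        (α * x ^ (α - 1) * Real.exp (-x) + x ^ α * (Real.exp (-x) * (-1))) x := by
      exact (Real.hasDerivAt_rpow_const (Or.inl hx0.ne')).mul
        ((Real.hasDerivAt_exp (-x)).comp x (hasDerivAt_neg x))
    have := h1.sub h2
    convert this using 1
    · rfl
    · rfl
    · rfl
    have hxa : x ^ α = x ^ (α - 1) * x := by
      rw [← Real.rpow_add_one hx0.ne' (α - 1)]; ring_nf
    rw [hxa]; ring
  have hanti : AntitoneOn ω (Set.Ici (0 : ℝ)) := by
    apply antitoneOn_of_deriv_nonpos (convex_Ici 0) hωcont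
    · intro x hx
      exact (hderiv x hx).differentiableAt.differentiableWithinAt
    · intro x hx
      rw [(hderiv x hx).deriv]
      have hx0 : (0 : ℝ) < x := by rwa [interior_Ici] at hx
      have hFnn : 0 ≤ F x :=
        intervalIntegral.integral_nonneg hx0.le
          (fun t ht => mul_nonneg (Real.rpow_nonneg ht.1 _) (Real.exp_pos _).le)
      have : 0 ≤ x ^ (α - 1) * Real.exp (-x) :=
        mul_nonneg (Real.rpow_nonneg hx0.le _) (Real.exp_pos _).le
      linarith
  refine ⟨hω0, hanti, fun x hx => ?_⟩
  calc ω x ≤ ω 0 := hanti (le_refl (0:ℝ) : (0:ℝ) ∈ Set.Ici (0:ℝ)) hx hx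
  _ = 0 := hω0
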